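/- Fix p with 1 < p ≤ 2 and two nested relaxation intervals: 0 < η₋ ≤ ε₋ ≤ ε₊ ≤ η₊ < ∞ (so [ε₋, ε₊] ⊆ [η₋, η₊]). Then for every t ≥ 0 one has κ_η(t) ≤ κ_ε(t), i.e. the relaxed integrand κ_ε is pointwise monotonically decreasing with respect to enlarging the relaxation interval. -/

import Mathlib

/-- The relaxed integrand `κ_ε`. -/
noncomputable def kappaEps (p εm εp t : ℝ) : ℝ :=
  if t ≤ εm then (1 / 2) * εm ^ (p - 2) * t ^ 2 + (1 / p - 1 / 2) * εm ^ p
  else if t ≤ εp then (1 / p) * t ^ p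
  else (1 / 2) * εp ^ (p - 2) * t ^ 2 + (1 / p - 1 / 2) * εp ^ p

open Real Set



noncomputable def gfun (p t x : ℝ) : ℝ :=
  (1 / 2) * x ^ (p - 2) * t ^ 2 + (1 / p - 1 / 2) * x ^ p

lemma gfun_hasDerivAt (p t x : ℝ) (hx : 0 < x) :
    HasDerivAt (gfun p t)
      ((1 / 2) * ((p - 2) * x ^ (p - 3)) * t ^ 2 + (1 / p - 1 / 2) * (p * x ^ (p - 1))) x := by
  have h1 : HasDerivAt (fun y : ℝ => y ^ (p - 2)) ((p - 2) * x ^ (p - 2 - 1)) x :=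
    Real.hasDerivAt_rpow_const (Or.inl hx.ne')
  have h2 : HasDerivAt (fun y : ℝ => y ^ p) (p * x ^ (p - 1)) x :=
    Real.hasDerivAt_rpow_const (Or.inl hx.ne')
  have h3 : p - 2 - 1 = p - 3 := by ring
  rw [h3] at h1
  have := ((h1.const_mul (1/2)).mul_const (t ^ 2)).add (h2.const_mul (1 / p - 1 / 2))
  exact this

lemma gderiv_eq (p t x : ℝ) (hp1 : 1 < p) (hx : 0 < x) :
    (1 / 2) * ((p - 2) * x ^ (p - 3)) * t ^ 2 + (1 / p - 1 / 2) * (p * x ^ (p - 1))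
      = ((2 - p) / 2) * (x ^ (p - 3) * (x ^ 2 - t ^ 2)) := by
  have hp0 : p ≠ 0 := by linarith
  have h : x ^ (p - 1) = x ^ (p - 3) * x ^ 2 := by
    rw [show p - 1 = (p - 3) + 2 by ring, Real.rpow_add hx, Real.rpow_two]
  rw [h]; field_simp; ring

lemma gfun_mono (p t : ℝ) (hp1 : 1 < p) (hp2 : p ≤ 2) (ht : 0 ≤ t)
    (a b : ℝ) (ha : 0 < a) (hta : t ≤ a) (hab : a ≤ b) :
    gfun p t a ≤ gfun p t b := by
  have hdiff : ∀ x ∈ Icc a b, HasDerivAt (gfun p t)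
      ((1 / 2) * ((p - 2) * x ^ (p - 3)) * t ^ 2 + (1 / p - 1 / 2) * (p * x ^ (p - 1))) x :=
    fun x hx => gfun_hasDerivAt p t x (lt_of_lt_of_le ha hx.1)
  have hmono : MonotoneOn (gfun p t) (Icc a b) := by
    apply monotoneOn_of_deriv_nonneg (convex_Icc a b)
    · exact fun x hx => ((hdiff x hx).differentiableAt).continuousAt.continuousWithinAt
    · intro x hx
      rw [interior_Icc] at hx
      exact ((hdiff x (Ioo_subset_Icc_self hx)).differentiableAt).differentiableWithinAt
    · intro x hx
      rw [interior_Icc] at hx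
      have hx0 : 0 < x := lt_trans ha hx.1
      rw [(gfun_hasDerivAt p t x hx0).deriv, gderiv_eq p t x hp1 hx0]
      have h1 : (0:ℝ) ≤ (2 - p) / 2 := by linarith
      have h2 : (0:ℝ) ≤ x ^ (p - 3) := Real.rpow_nonneg hx0.le _
      have h3 : (0:ℝ) ≤ x ^ 2 - t ^ 2 := by
        have := pow_le_pow_left₀ ht (le_of_lt (lt_of_le_of_lt hta hx.1)) 2
        linarith
      positivity
  exact hmono ⟨le_refl a, hab⟩ ⟨hab, le_refl b⟩ hab

lemma gfun_anti (p t : ℝ) (hp1 : 1 < p) (hp2 : p ≤ 2) (ht : 0 ≤ t)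
    (a b : ℝ) (ha : 0 < a) (hab : a ≤ b) (hbt : b ≤ t) :
    gfun p t b ≤ gfun p t a := by
  have hdiff : ∀ x ∈ Icc a b, HasDerivAt (gfun p t)
      ((1 / 2) * ((p - 2) * x ^ (p - 3)) * t ^ 2 + (1 / p - 1 / 2) * (p * x ^ (p - 1))) x :=
    fun x hx => gfun_hasDerivAt p t x (lt_of_lt_of_le ha hx.1)
  have hanti : AntitoneOn (gfun p t) (Icc a b) := by
    apply antitoneOn_of_deriv_nonpos (convex_Icc a b)
    · exact fun x hx => ((hdiff x hx).differentiableAt).continuousAt.continuousWithinAt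
    · intro x hx
      rw [interior_Icc] at hx
      exact ((hdiff x (Ioo_subset_Icc_self hx)).differentiableAt).differentiableWithinAt
    · intro x hx
      rw [interior_Icc] at hx
      have hx0 : 0 < x := lt_trans ha hx.1
      rw [(gfun_hasDerivAt p t x hx0).deriv, gderiv_eq p t x hp1 hx0]
      have h1 : (0:ℝ) ≤ (2 - p) / 2 := by linarith
      have h2 : (0:ℝ) ≤ x ^ (p - 3) := Real.rpow_nonneg hx0.le _
      have h3 : x ^ 2 - t ^ 2 ≤ 0 := by
        have := pow_le_pow_left₀ hx0.le (le_of_lt (lt_of_lt_of_le hx.2 hbt)) 2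
        linarith
      have := mul_nonneg h1 h2
      nlinarith
  exact hanti ⟨le_refl a, hab⟩ ⟨hab, le_refl b⟩ hab

lemma gfun_self (p t : ℝ) (hp1 : 1 < p) (ht : 0 < t) :
    gfun p t t = (1 / p) * t ^ p := by
  unfold gfun
  have h : t ^ (p - 2) * t ^ 2 = t ^ p := by
    rw [← Real.rpow_two, ← Real.rpow_add ht]; ring_nf
  have hp0 : p ≠ 0 := by linarith
  nlinarith [h]

/-- `κ` is pointwise monotonically decreasing in the relaxation interval:
if `[ε₋, ε₊] ⊆ [η₋, η₊]` then `κ_η(t) ≤ κ_ε(t)`. -/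
theorem stmt_9 (p ηm εm εp ηp : ℝ) (hp1 : 1 < p) (hp2 : p ≤ 2)
    (hηm : 0 < ηm) (h1 : ηm ≤ εm) (h2 : εm ≤ εp) (h3 : εp ≤ ηp) :
    ∀ t : ℝ, 0 ≤ t → kappaEps p ηm ηp t ≤ kappaEps p εm εp t := by
  intro t ht
  have hkg : ∀ a b : ℝ, kappaEps p a b t =
      if t ≤ a then gfun p t a else if t ≤ b then (1 / p) * t ^ p else gfun p t b := by
    intro a b; rfl
  rw [hkg, hkg]
  by_cases hA : t ≤ ηm
  · rw [if_pos hA, if_pos (hA.trans h1)]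
    exact gfun_mono p t hp1 hp2 ht ηm εm hηm hA h1
  · push_neg at hA
    have ht0 : 0 < t := lt_of_lt_of_le hηm hA.le |>.trans_le (le_refl t)
    rw [if_neg (not_le.mpr hA)]
    by_cases hB : t ≤ εm
    · rw [if_pos hB, if_pos (hB.trans (h2.trans h3))]
      rw [← gfun_self p t hp1 (hηm.trans hA)]
      exact gfun_mono p t hp1 hp2 ht t εm (hηm.trans hA) (le_refl t) hB
    · push_neg at hB
      rw [if_neg (not_le.mpr hB)]
      by_cases hC : t ≤ εp
      · rw [if_pos hC, if_pos (hC.trans h3)]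
      · push_neg at hC
        rw [if_neg (not_le.mpr hC)]
        have hεp : 0 < εp := lt_of_lt_of_le hηm (h1.trans h2)
        by_cases hD : t ≤ ηp
        · rw [if_pos hD, ← gfun_self p t hp1 (hηm.trans hA)]
          exact gfun_anti p t hp1 hp2 ht εp t hεp hC.le (le_refl t)
        · push_neg at hD
          rw [if_neg (not_le.mpr hD)]
          exact gfun_anti p t hp1 hp2 ht εp ηp hεp h3 hD.le
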